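/- arXiv:2511.00168 — 3 statements merged into one kernel-verified Lean document; each statement's English description precedes it below -/
import Mathlib

section
/- Let M(s) = f0 + gᵀs + (1/2)sᵀHs + (β/6)‖s‖³ + (σ/4)‖s‖⁴ with σ ≥ 0, and let B(s) = H + (β/2)‖s‖ I + σ‖s‖² I. If a point s_c ∈ ℝⁿ satisfies B(s_c) s_c = -g, B(s_c) ⪰ 0, and β ≥ -3σ‖s_c‖, then s_c is a global minimizer of M over ℝⁿ. -/
open Matrix Polynomial

noncomputable def vecEnorm {n : ℕ} (s : Fin n → ℝ) : ℝ := Real.sqrt (s ⬝ᵥ s)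

noncomputable def Mfun {n : ℕ} (f0 : ℝ) (g : Fin n → ℝ)
    (H : Matrix (Fin n) (Fin n) ℝ) (β σ : ℝ) (s : Fin n → ℝ) : ℝ :=
  f0 + g ⬝ᵥ s + (1/2) * (s ⬝ᵥ (H *ᵥ s)) + (β/6) * vecEnorm s ^ 3 + (σ/4) * vecEnorm s ^ 4

noncomputable def Bmat {n : ℕ} (H : Matrix (Fin n) (Fin n) ℝ) (β σ : ℝ)
    (s : Fin n → ℝ) : Matrix (Fin n) (Fin n) ℝ :=
  H + ((β/2) * vecEnorm s) • (1 : Matrix (Fin n) (Fin n) ℝ)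
    + (σ * vecEnorm s ^ 2) • (1 : Matrix (Fin n) (Fin n) ℝ)

theorem stmt1 {n : ℕ} (f0 : ℝ) (g : Fin n → ℝ) (H : Matrix (Fin n) (Fin n) ℝ)
    (hH : H.IsSymm) (β σ : ℝ) (hσ : 0 ≤ σ) (sc : Fin n → ℝ)
    (h1 : (Bmat H β σ sc) *ᵥ sc = -g)
    (h2 : (Bmat H β σ sc).PosSemidef)
    (h3 : β ≥ -3 * σ * vecEnorm sc) :
    ∀ s : Fin n → ℝ, Mfun f0 g H β σ sc ≤ Mfun f0 g H β σ s := by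
  intro s
  have ha0 : 0 ≤ vecEnorm sc := Real.sqrt_nonneg _
  have hx0 : 0 ≤ vecEnorm s := Real.sqrt_nonneg _
  have hnn : ∀ v : Fin n → ℝ, 0 ≤ v ⬝ᵥ v := fun v =>
    Finset.sum_nonneg fun i _ => mul_self_nonneg _
  have hsc2 : sc ⬝ᵥ sc = vecEnorm sc ^ 2 := (Real.sq_sqrt (hnn sc)).symm
  have hs2 : s ⬝ᵥ s = vecEnorm s ^ 2 := (Real.sq_sqrt (hnn s)).symm
  -- symmetry of quadratic form
  have hsymm : ∀ v w : Fin n → ℝ, v ⬝ᵥ (H *ᵥ w) = w ⬝ᵥ (H *ᵥ v) := by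
    intro v w
    rw [dotProduct_mulVec, ← mulVec_transpose, hH.eq, dotProduct_comm]
  have hBv : ∀ v : Fin n → ℝ, (Bmat H β σ sc) *ᵥ v
      = H *ᵥ v + ((β/2) * vecEnorm sc + σ * vecEnorm sc ^ 2) • v := by
    intro v
    simp [Bmat, add_mulVec, smul_mulVec, one_mulVec, add_smul, add_assoc]
  have hgs : g ⬝ᵥ s
      = -(sc ⬝ᵥ (H *ᵥ s)) - ((β/2) * vecEnorm sc + σ * vecEnorm sc ^ 2) * (sc ⬝ᵥ s) := by
    have h := congrArg (fun v => v ⬝ᵥ s) h1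
    simp only [hBv, add_dotProduct, neg_dotProduct, smul_dotProduct, smul_eq_mul] at h
    rw [dotProduct_comm (H *ᵥ sc) s, hsymm s sc] at h
    linarith
  have hgsc : g ⬝ᵥ sc
      = -(sc ⬝ᵥ (H *ᵥ sc)) - ((β/2) * vecEnorm sc + σ * vecEnorm sc ^ 2) * (sc ⬝ᵥ sc) := by
    have h := congrArg (fun v => v ⬝ᵥ sc) h1
    simp only [hBv, add_dotProduct, neg_dotProduct, smul_dotProduct, smul_eq_mul] at h
    rw [dotProduct_comm (H *ᵥ sc) sc] at h
    linarith
  -- positive semidefiniteness at d = s - sc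
  have hpsd : 0 ≤ (s - sc) ⬝ᵥ (H *ᵥ (s - sc))
      + ((β/2) * vecEnorm sc + σ * vecEnorm sc ^ 2) * ((s - sc) ⬝ᵥ (s - sc)) := by
    have h := h2.dotProduct_mulVec_nonneg (s - sc)
    simpa [hBv, dotProduct_add, dotProduct_smul, smul_eq_mul] using h
  have hexp : (s - sc) ⬝ᵥ (H *ᵥ (s - sc))
      = s ⬝ᵥ (H *ᵥ s) - 2 * (sc ⬝ᵥ (H *ᵥ s)) + sc ⬝ᵥ (H *ᵥ sc) := by
    rw [mulVec_sub, dotProduct_sub, sub_dotProduct, sub_dotProduct, hsymm s sc]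
    ring
  have hexp2 : (s - sc) ⬝ᵥ (s - sc)
      = vecEnorm s ^ 2 - 2 * (sc ⬝ᵥ s) + vecEnorm sc ^ 2 := by
    rw [dotProduct_sub, sub_dotProduct, sub_dotProduct, hsc2, hs2, dotProduct_comm s sc]
    ring
  rw [hexp, hexp2] at hpsd
  have h3' : 0 ≤ β + 3 * σ * vecEnorm sc := by linarith
  simp only [Mfun, hgs, hgsc, hsc2]
  have t1 : 0 ≤ (β + 3 * σ * vecEnorm sc) * ((2 * vecEnorm s + vecEnorm sc) * (vecEnorm s - vecEnorm sc) ^ 2) :=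
    mul_nonneg h3' (mul_nonneg (by linarith) (sq_nonneg _))
  have t2 : 0 ≤ σ * (vecEnorm s * (vecEnorm s - vecEnorm sc)) ^ 2 := mul_nonneg hσ (sq_nonneg _)
  nlinarith [hpsd, t1, t2]
end

section
/- Suppose 0 ∈ ℝⁿ is a global minimizer of M(s) = f0 + gᵀs + (1/2)sᵀHs + (β/6)‖s‖³ + (σ/4)‖s‖⁴ with σ ≥ 0. Then g = 0 and for the smallest eigenvalue λ_min of H, the univariate function z ↦ (1/2)λ_min z² + (β/6)z³ + (σ/4)z⁴ is nonnegative for all z ≥ 0. -/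
open Matrix Polynomial

lemma vecEnorm_zero {n : ℕ} : vecEnorm (0 : Fin n → ℝ) = 0 := by
  simp [vecEnorm]

lemma dot_self_nonneg {n : ℕ} (v : Fin n → ℝ) : 0 ≤ v ⬝ᵥ v := by
  apply Finset.sum_nonneg
  intro i _
  exact mul_self_nonneg _

lemma vecEnorm_smul {n : ℕ} (c : ℝ) (v : Fin n → ℝ) :
    vecEnorm (c • v) = |c| * vecEnorm v := by
  unfold vecEnorm
  rw [smul_dotProduct, dotProduct_smul, smul_eq_mul, smul_eq_mul, ← mul_assoc,
    Real.sqrt_mul (mul_self_nonneg c), Real.sqrt_mul_self_eq_abs]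

lemma vecEnorm_sq {n : ℕ} (v : Fin n → ℝ) : vecEnorm v ^ 2 = v ⬝ᵥ v := by
  simp [vecEnorm, Real.sq_sqrt (dot_self_nonneg v)]

lemma aux_pow_bound (t x : ℝ) (ht0 : 0 ≤ t) (ht1 : t ≤ 1) (k : ℕ) (hk : 2 ≤ k) :
    t ^ k * x ≤ t ^ 2 * |x| := by
  calc t ^ k * x ≤ t ^ k * |x| :=
        mul_le_mul_of_nonneg_left (le_abs_self x) (pow_nonneg ht0 k)
    _ ≤ t ^ 2 * |x| :=
        mul_le_mul_of_nonneg_right (pow_le_pow_of_le_one ht0 ht1 hk) (abs_nonneg x)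

theorem stmt7 {n : ℕ} (f0 : ℝ) (g : Fin n → ℝ) (H : Matrix (Fin n) (Fin n) ℝ)
    (hH : H.IsSymm) (β σ : ℝ) (hσ : 0 ≤ σ) (lamMin : ℝ)
    (heig : ∃ v : Fin n → ℝ, v ≠ 0 ∧ H *ᵥ v = lamMin • v)
    (hlow : ∀ v : Fin n → ℝ, lamMin * (v ⬝ᵥ v) ≤ v ⬝ᵥ (H *ᵥ v))
    (hmin : ∀ s : Fin n → ℝ, Mfun f0 g H β σ 0 ≤ Mfun f0 g H β σ s) :
    g = 0 ∧ ∀ z : ℝ, 0 ≤ z →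
      0 ≤ (1/2) * lamMin * z^2 + (β/6) * z^3 + (σ/4) * z^4 := by
  have hM0 : Mfun f0 g H β σ 0 = f0 := by
    simp [Mfun, vecEnorm_zero]
  have hkey : ∀ (c : ℝ) (v : Fin n → ℝ),
      0 ≤ c * (g ⬝ᵥ v) + (1/2) * (c^2 * (v ⬝ᵥ (H *ᵥ v)))
        + (β/6) * (|c| * vecEnorm v)^3 + (σ/4) * (|c| * vecEnorm v)^4 := by
    intro c v
    have h := hmin (c • v)
    rw [hM0] at h
    have hdot : g ⬝ᵥ (c • v) = c * (g ⬝ᵥ v) := by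
      rw [dotProduct_smul, smul_eq_mul]
    have hquad : (c • v) ⬝ᵥ (H *ᵥ (c • v)) = c^2 * (v ⬝ᵥ (H *ᵥ v)) := by
      rw [mulVec_smul, smul_dotProduct, dotProduct_smul, smul_eq_mul, smul_eq_mul]
      ring
    rw [Mfun, hdot, hquad, vecEnorm_smul] at h
    linarith
  have hg : g = 0 := by
    by_contra hgne
    have hA : 0 < g ⬝ᵥ g := by
      rcases lt_or_eq_of_le (dot_self_nonneg g) with h | h
      · exact h
      · exact absurd ((dotProduct_self_eq_zero).mp h.symm) hgne
    obtain ⟨A, hAdef⟩ : ∃ A, A = g ⬝ᵥ g := ⟨_, rfl⟩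
    obtain ⟨D, hDdef⟩ : ∃ D, D = g ⬝ᵥ (H *ᵥ g) := ⟨_, rfl⟩
    obtain ⟨N, hNdef⟩ : ∃ N, N = vecEnorm g := ⟨_, rfl⟩
    rw [← hAdef] at hA
    obtain ⟨C, hCdef⟩ : ∃ C, C = |(1/2)*D| + |(β/6)*N^3| + |(σ/4)*N^4| := ⟨_, rfl⟩
    have hCnn : 0 ≤ C := by rw [hCdef]; positivity
    obtain ⟨t, htdef⟩ : ∃ t, t = min 1 (A / (2 * (C + 1))) := ⟨_, rfl⟩
    have htpos : 0 < t := by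
      rw [htdef]; exact lt_min one_pos (by positivity)
    have ht1 : t ≤ 1 := htdef ▸ min_le_left _ _
    have ht2 : t ≤ A / (2 * (C + 1)) := htdef ▸ min_le_right _ _
    have h := hkey (-t) g
    rw [abs_neg, abs_of_pos htpos, ← hAdef, ← hDdef, ← hNdef] at h
    have e1 : (1/2) * ((-t)^2 * D) ≤ t^2 * |(1/2)*D| := by
      have : (1/2) * ((-t)^2 * D) = t^2 * ((1/2)*D) := by ring
      rw [this]
      exact aux_pow_bound t _ htpos.le ht1 2 le_rfl
    have e2 : (β/6) * (t * N)^3 ≤ t^2 * |(β/6)*N^3| := by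
      have : (β/6) * (t * N)^3 = t^3 * ((β/6)*N^3) := by ring
      rw [this]
      exact aux_pow_bound t _ htpos.le ht1 3 (by norm_num)
    have e3 : (σ/4) * (t * N)^4 ≤ t^2 * |(σ/4)*N^4| := by
      have : (σ/4) * (t * N)^4 = t^4 * ((σ/4)*N^4) := by ring
      rw [this]
      exact aux_pow_bound t _ htpos.le ht1 4 (by norm_num)
    have hbig : t * A ≤ t^2 * C := by
      rw [hCdef]; nlinarith [h, e1, e2, e3]
    have hAle : A ≤ t * C := by
      have h2 : t * A ≤ t * (t * C) := by nlinarith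
      exact le_of_mul_le_mul_left h2 htpos
    have hlt : t * C < A := by
      calc t * C ≤ (A / (2 * (C + 1))) * C :=
            mul_le_mul_of_nonneg_right ht2 hCnn
        _ < A := by
            rw [div_mul_eq_mul_div, div_lt_iff₀ (by positivity)]
            nlinarith [mul_nonneg hA.le hCnn]
    linarith
  subst hg
  refine ⟨rfl, ?_⟩
  intro z hz
  obtain ⟨v, hv0, hveig⟩ := heig
  have hvpos : 0 < v ⬝ᵥ v := by
    rcases lt_or_eq_of_le (dot_self_nonneg v) with h | h
    · exact h
    · exact absurd ((dotProduct_self_eq_zero).mp h.symm) hv0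
  have hnv : 0 < vecEnorm v := Real.sqrt_pos.mpr hvpos
  obtain ⟨c, hcdef⟩ : ∃ c, c = z / vecEnorm v := ⟨_, rfl⟩
  have hcnn : 0 ≤ c := hcdef ▸ div_nonneg hz hnv.le
  have hcv : c * vecEnorm v = z := by rw [hcdef]; exact div_mul_cancel₀ z hnv.ne'
  have h := hkey c v
  rw [abs_of_nonneg hcnn, zero_dotProduct, hcv] at h
  have hquad : c^2 * (v ⬝ᵥ (H *ᵥ v)) = lamMin * z^2 := by
    rw [hveig, dotProduct_smul, smul_eq_mul]
    have h1 : c^2 * (v ⬝ᵥ v) = z^2 := by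
      rw [← vecEnorm_sq v]; nlinarith [hcv]
    linear_combination lamMin * h1
  rw [hquad] at h
  linarith
end

section
/- Let B(s*) = H + (β/2)‖s*‖I + σ‖s*‖²I. If s* satisfies B(s*)s* = -g, B(s*) ≻ 0 (positive definite), and β ≥ -3σ‖s*‖ with σ ≥ 0, then s* is the unique minimizer: M(s) > M(s*) for all s ≠ s*. -/
open Matrix Polynomial

theorem stmt19 {n : ℕ} (f0 : ℝ) (g : Fin n → ℝ) (H : Matrix (Fin n) (Fin n) ℝ)
    (hH : H.IsSymm) (β σ : ℝ) (hσ : 0 ≤ σ) (sstar : Fin n → ℝ)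
    (h1 : (Bmat H β σ sstar) *ᵥ sstar = -g)
    (h2 : (Bmat H β σ sstar).PosDef)
    (h3 : β ≥ -3 * σ * vecEnorm sstar) :
    ∀ s : Fin n → ℝ, s ≠ sstar → Mfun f0 g H β σ sstar < Mfun f0 g H β σ s := by
  intro s hs
  have hw : s - sstar ≠ 0 := sub_ne_zero.mpr hs
  have hQ := h2.dotProduct_mulVec_pos (x := s - sstar) hw
  simp only [star_trivial] at hQ
  set rs := vecEnorm sstar with hrsdef
  set r := vecEnorm s with hrdef
  have hr0 : 0 ≤ r := Real.sqrt_nonneg _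
  have hrs0 : 0 ≤ rs := Real.sqrt_nonneg _
  have hself : ∀ v : Fin n → ℝ, v ⬝ᵥ v = vecEnorm v ^ 2 := by
    intro v
    rw [vecEnorm, Real.sq_sqrt]
    exact Finset.sum_nonneg fun i _ => mul_self_nonneg _
  have hss : s ⬝ᵥ s = r ^ 2 := hself s
  have hstst : sstar ⬝ᵥ sstar = rs ^ 2 := hself sstar
  set c := β/2 * rs + σ * rs^2 with hc
  have hBv : ∀ v : Fin n → ℝ, Bmat H β σ sstar *ᵥ v = H *ᵥ v + c • v := by
    intro v
    rw [Bmat, Matrix.add_mulVec, Matrix.add_mulVec, Matrix.smul_mulVec,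
      Matrix.smul_mulVec, Matrix.one_mulVec, hc, add_smul, add_assoc]
  have hsym : sstar ⬝ᵥ (H *ᵥ s) = s ⬝ᵥ (H *ᵥ sstar) := by
    rw [Matrix.dotProduct_mulVec, ← Matrix.mulVec_transpose, hH.eq, dotProduct_comm]
  set a := s ⬝ᵥ (H *ᵥ s) with ha
  set b := s ⬝ᵥ (H *ᵥ sstar) with hb
  set d := sstar ⬝ᵥ (H *ᵥ sstar) with hd
  set p := s ⬝ᵥ sstar with hp
  have hg : g = -(H *ᵥ sstar) - c • sstar := by
    have h := h1
    rw [hBv] at h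
    rw [neg_eq_iff_eq_neg.mp h.symm]
    abel
  have hQ' : (s - sstar) ⬝ᵥ (Bmat H β σ sstar *ᵥ (s - sstar))
      = a - 2*b + d + c * (r^2 - 2*p + rs^2) := by
    rw [hBv]
    simp only [Matrix.mulVec_sub, dotProduct_add, dotProduct_sub, sub_dotProduct,
      dotProduct_smul, smul_eq_mul, smul_sub]
    rw [hsym, hss, hstst, dotProduct_comm sstar s, ← ha, ← hb, ← hd, ← hp]
    ring
  rw [hQ'] at hQ
  have hgs : g ⬝ᵥ s = -b - c * p := by
    rw [hg]
    simp only [sub_dotProduct, neg_dotProduct, smul_dotProduct, smul_eq_mul]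
    rw [dotProduct_comm (H *ᵥ sstar) s, dotProduct_comm sstar s, ← hb, ← hp]
  have hgstar : g ⬝ᵥ sstar = -d - c * rs^2 := by
    rw [hg]
    simp only [sub_dotProduct, neg_dotProduct, smul_dotProduct, smul_eq_mul]
    rw [dotProduct_comm (H *ᵥ sstar) sstar, ← hd, hstst]
  have hM : Mfun f0 g H β σ s - Mfun f0 g H β σ sstar
      = (1/2) * (a - 2*b + d + c * (r^2 - 2*p + rs^2))
        + (β/12)*(r-rs)^2*(2*r+rs) + (σ/4)*(r^2-rs^2)^2 := by
    rw [Mfun, Mfun, hgs, hgstar, ← ha, ← hd, ← hrdef, ← hrsdef, hc]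
    ring
  have hF : 0 ≤ (β/12)*(r-rs)^2*(2*r+rs) + (σ/4)*(r^2-rs^2)^2 := by
    nlinarith [mul_nonneg (mul_nonneg (by linarith : (0:ℝ) ≤ β + 3*σ*rs) (sq_nonneg (r-rs))) (by linarith : (0:ℝ) ≤ 2*r+rs), mul_nonneg (mul_nonneg hσ (sq_nonneg r)) (sq_nonneg (r-rs))]
  clear_value r rs c a b d p
  have hdiff : 0 < Mfun f0 g H β σ s - Mfun f0 g H β σ sstar := by
    rw [hM]; linarith
  linarith [hdiff]
end
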